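/- Let P ⊆ ℝⁿ be a discrete point set and p ∈ P such that V(p) is not a polyhedron. Then p lies on the boundary of conv(P). -/

import Mathlib

open scoped RealInnerProductSpace
open Set

noncomputable section

abbrev E (n : ℕ) := EuclideanSpace ℝ (Fin n)

/-- `P` is discrete: every bounded set contains only finitely many points of `P`. -/
def IsDiscretePointSet {n : ℕ} (P : Set (E n)) : Prop :=
  ∀ B : Set (E n), Bornology.IsBounded B → (P ∩ B).Finite

/-- The Voronoi cell of `p` relative to `P`. -/
def voronoiCell {n : ℕ} (P : Set (E n)) (p : E n) : Set (E n) :=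
  {x | ∀ q ∈ P, dist x p ≤ dist x q}

/-- A polyhedron: a finite intersection of closed half-spaces. -/
def IsPolyhedron {n : ℕ} (S : Set (E n)) : Prop :=
  ∃ (k : ℕ) (y : Fin k → E n) (α : Fin k → ℝ),
    S = ⋂ i, {x : E n | (inner ℝ x (y i) : ℝ) ≤ α i}

/-- A polytope: a bounded polyhedron. -/
def IsPolytope {n : ℕ} (S : Set (E n)) : Prop :=
  IsPolyhedron S ∧ Bornology.IsBounded S

/-- The half-space of points at least as close to `p` as to `q`. -/
def halfSpace {n : ℕ} (p q : E n) : Set (E n) :=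
  {x : E n | (inner ℝ (x - p) (q - p) : ℝ) ≤ (1/2) * ‖q - p‖^2}

/-- The conic hull: all nonnegative combinations of finitely many elements of `M`. -/
def coneHull {n : ℕ} (M : Set (E n)) : Set (E n) :=
  {x | ∃ (k : ℕ) (v : Fin k → E n) (c : Fin k → ℝ),
    (∀ i, v i ∈ M) ∧ (∀ i, 0 ≤ c i) ∧ x = ∑ i, c i • v i}

/-- The direction cone of `p`: the conic hull of `P - p`. -/
def dirCone {n : ℕ} (P : Set (E n)) (p : E n) : Set (E n) :=
  coneHull ((fun q => q - p) '' P)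

/-- A cone is finitely generated if it is the conic hull of finitely many vectors. -/
def FinitelyGeneratedCone {n : ℕ} (C : Set (E n)) : Prop :=
  ∃ (k : ℕ) (v : Fin k → E n), C = coneHull (Set.range v)

/-- `q` is Voronoi relevant for `p`: dropping `halfSpace p q` strictly enlarges the
intersection defining the Voronoi cell. -/
def VoronoiRelevant {n : ℕ} (P : Set (E n)) (p q : E n) : Prop :=
  (⋂ r ∈ P \ {p}, halfSpace p r) ⊂ ⋂ r ∈ P \ {p, q}, halfSpace p r


lemma distA {n : ℕ} (x p q : E n) :
    dist x p ≤ dist x q ↔ (inner ℝ (x - p) (q - p) : ℝ) ≤ (1/2) * ‖q - p‖^2 := by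
  have h1 : dist x p ≤ dist x q ↔ dist x p ^ 2 ≤ dist x q ^ 2 := by
    constructor
    · intro h; exact pow_le_pow_left₀ dist_nonneg h 2
    · intro h; exact (pow_le_pow_iff_left₀ dist_nonneg dist_nonneg two_ne_zero).mp h
  rw [h1, dist_eq_norm, dist_eq_norm]
  have hxq : x - q = (x - p) - (q - p) := by abel
  have key : ‖(x - p) - (q - p)‖ ^ 2
      = ‖x - p‖ ^ 2 - 2 * (inner ℝ (x - p) (q - p) : ℝ) + ‖q - p‖ ^ 2 :=
    norm_sub_sq_real _ _
  rw [hxq]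
  constructor <;> intro h <;> nlinarith

lemma lemB {n : ℕ} (F : Finset (E n)) (v z : E n) (hz : z ∈ convexHull ℝ (F : Set (E n))) :
    ∃ q ∈ F, (inner ℝ v z : ℝ) ≤ inner ℝ v q := by
  have hne : F.Nonempty := by
    rcases F.eq_empty_or_nonempty with h | h
    · simp [h] at hz
    · exact h
  set f : E n → ℝ := fun q => (inner ℝ v q : ℝ) with hf
  have hconv : Convex ℝ {w : E n | f w ≤ F.sup' hne f} :=
    convex_halfSpace_le ⟨fun a b => inner_add_right v a b, fun c a => real_inner_smul_right v a c⟩ _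
  have hsub : (F : Set (E n)) ⊆ {w : E n | f w ≤ F.sup' hne f} := by
    intro q hq; exact Finset.le_sup' f hq
  have hzM : f z ≤ F.sup' hne f := convexHull_min hsub hconv hz
  obtain ⟨q, hq, hqM⟩ := Finset.exists_mem_eq_sup' hne f
  exact ⟨q, hq, show f z ≤ f q from hqM ▸ hzM⟩

lemma lemC {n : ℕ} {P : Set (E n)} {p : E n} (hp : p ∈ P)
    (hint : p ∈ interior (convexHull ℝ P)) :
    ∃ (F : Finset (E n)) (ε' : ℝ), ↑F ⊆ P ∧ p ∈ F ∧ 0 < ε' ∧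
      ∀ x : E n, ∃ q ∈ F, ε' * ‖x - p‖ ≤ (inner ℝ (x - p) (q - p) : ℝ) := by
  classical
  rw [mem_interior_iff_mem_nhds] at hint
  obtain ⟨ε, hε, hball⟩ := Metric.mem_nhds_iff.mp hint
  set pt : Fin n × Bool → E n :=
    fun is => p + (if is.2 then ε/2 else -(ε/2)) • EuclideanSpace.single is.1 (1:ℝ) with hptdef
  have hpt : ∀ is, pt is ∈ convexHull ℝ P := by
    intro is
    apply hball
    rw [Metric.mem_ball, hptdef]
    simp only [dist_self_add_left, norm_smul, EuclideanSpace.norm_single, norm_one, mul_one]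
    rcases is.2 with _ | _ <;> simp <;> [skip; skip] <;>
      rw [abs_of_pos (by linarith)] <;> linarith
  have hex : ∀ is, ∃ tt : Finset (E n), ↑tt ⊆ P ∧ pt is ∈ convexHull ℝ (tt : Set (E n)) := by
    intro is
    have h := hpt is
    rw [convexHull_eq_union_convexHull_finite_subsets] at h
    simpa using h
  choose t ht hmem using hex
  set F : Finset (E n) := insert p (Finset.univ.biUnion t) with hF
  have hFP : (F : Set (E n)) ⊆ P := by
    intro q hq
    simp only [hF, Finset.coe_insert, Set.mem_insert_iff, Finset.coe_biUnion,
      Finset.mem_coe, Finset.mem_biUnion] at hq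
    rcases hq with rfl | hq
    · exact hp
    · simp only [Set.mem_iUnion] at hq
      obtain ⟨is, _, hq⟩ := hq
      exact ht is hq
  have hpF : p ∈ F := Finset.mem_insert_self _ _
  have hsqrt : (0:ℝ) < Real.sqrt n + 1 := by positivity
  refine ⟨F, ε / (2 * (Real.sqrt n + 1)), hFP, hpF, by positivity, ?_⟩
  intro x
  by_cases hxp : x = p
  · exact ⟨p, hpF, by simp [hxp]⟩
  set v : E n := x - p with hv
  have hvne : v ≠ 0 := sub_ne_zero.mpr hxp
  have hi0 : ∃ i, v i ≠ 0 := by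
    by_contra hc
    push_neg at hc
    exact hvne (by ext i; exact hc i)
  obtain ⟨i0, hi0⟩ := hi0
  obtain ⟨i, -, hi⟩ := Finset.exists_max_image Finset.univ (fun j => |v j|) ⟨i0, Finset.mem_univ _⟩
  have hnorm : ‖v‖ ≤ Real.sqrt n * |v i| := by
    rw [EuclideanSpace.norm_eq]
    have h1 : ∑ j, ‖v j‖ ^ 2 ≤ (n : ℝ) * |v i| ^ 2 := by
      calc ∑ j, ‖v j‖ ^ 2 ≤ ∑ _j : Fin n, |v i| ^ 2 := by
            apply Finset.sum_le_sum
            intro j _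
            rw [Real.norm_eq_abs]
            exact pow_le_pow_left₀ (abs_nonneg _) (hi j (Finset.mem_univ _)) 2
        _ = (n : ℝ) * |v i| ^ 2 := by simp [mul_comm]
    calc Real.sqrt (∑ j, ‖v j‖ ^ 2) ≤ Real.sqrt ((n:ℝ) * |v i| ^ 2) := Real.sqrt_le_sqrt h1
      _ = Real.sqrt n * |v i| := by
          rw [Real.sqrt_mul (by positivity), Real.sqrt_sq (abs_nonneg _)]
  have key : ∃ is : Fin n × Bool, (inner ℝ v (pt is - p) : ℝ) = (ε/2) * |v i| := by
    rcases le_or_gt 0 (v i) with hvi | hvi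
    · refine ⟨(i, true), ?_⟩
      simp [hptdef, real_inner_smul_right, EuclideanSpace.inner_single_right,
        abs_of_nonneg hvi]
    · refine ⟨(i, false), ?_⟩
      simp [hptdef, real_inner_smul_right, EuclideanSpace.inner_single_right,
        abs_of_neg hvi]
  obtain ⟨is, hkey⟩ := key
  have htF : (t is : Set (E n)) ⊆ (F : Set (E n)) := by
    intro q hq
    simp only [hF, Finset.coe_insert, Set.mem_insert_iff]
    right
    exact Finset.mem_coe.mpr (Finset.mem_biUnion.mpr ⟨is, Finset.mem_univ _, hq⟩)
  obtain ⟨q, hqF, hq⟩ := lemB F v (pt is) (convexHull_mono htF (hmem is))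
  refine ⟨q, hqF, ?_⟩
  have h3 : (inner ℝ v (pt is - p) : ℝ) ≤ inner ℝ v (q - p) := by
    rw [inner_sub_right, inner_sub_right]
    linarith
  rw [hkey] at h3
  have h4 : ε / (2 * (Real.sqrt n + 1)) * ‖v‖ ≤ (ε/2) * |v i| := by
    rw [div_mul_eq_mul_div, div_le_iff₀ (by positivity)]
    have h5 : ‖v‖ * Real.sqrt n ≤ Real.sqrt n * |v i| * Real.sqrt n := by
      nlinarith [Real.sqrt_nonneg (n:ℝ), norm_nonneg v]
    nlinarith [Real.sqrt_nonneg (n:ℝ), norm_nonneg v, abs_nonneg (v i)]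
  linarith

theorem stmt8 {n : ℕ} (P : Set (E n)) (hP : IsDiscretePointSet P) (p : E n) (hp : p ∈ P)
    (hnp : ¬ IsPolyhedron (voronoiCell P p)) :
    p ∈ frontier (convexHull ℝ P) := by
  classical
  by_contra hfr
  have hpc : p ∈ convexHull ℝ P := subset_convexHull ℝ P hp
  have hint : p ∈ interior (convexHull ℝ P) := by
    by_contra hni
    exact hfr ⟨subset_closure hpc, hni⟩
  obtain ⟨F, ε', hFP, hpF, hε', hdir⟩ := lemC hp hint
  apply hnp
  set C0 := F.sup' ⟨p, hpF⟩ (fun q => (1/2) * ‖q - p‖^2) with hC0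
  set R := C0 / ε' with hRdef
  have hC0nonneg : (0:ℝ) ≤ C0 := le_trans (by simp)
    (Finset.le_sup' (fun q => (1/2) * ‖q - p‖^2) hpF)
  have hR0 : 0 ≤ R := div_nonneg hC0nonneg hε'.le
  have hbound : ∀ x : E n,
      (∀ q ∈ F, (inner ℝ (x-p) (q-p) : ℝ) ≤ (1/2)*‖q-p‖^2) → ‖x - p‖ ≤ R := by
    intro x hx
    obtain ⟨q, hqF, hq⟩ := hdir x
    have h1 : ε' * ‖x - p‖ ≤ C0 :=
      le_trans hq (le_trans (hx q hqF) (Finset.le_sup' (fun q => (1/2) * ‖q - p‖^2) hqF))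
    rw [hRdef]
    exact (le_div_iff₀ hε').mpr (by linarith)
  set M := F.sup' ⟨p, hpF⟩ (fun q => dist q p) with hM
  set ρ := max M (2*R+1) with hρ
  set G := P ∩ Metric.closedBall p ρ with hG
  have hGfin : G.Finite := hP _ Metric.isBounded_closedBall
  have hFG : (F : Set (E n)) ⊆ G := fun q hq =>
    ⟨hFP hq, Metric.mem_closedBall.mpr
      (le_trans (Finset.le_sup' (fun q => dist q p) hq) (le_max_left _ _))⟩
  have hSiff : ∀ (x w : E n) (c : ℝ),
      ((inner ℝ x w : ℝ) ≤ c + inner ℝ p w) ↔ ((inner ℝ (x - p) w : ℝ) ≤ c) := by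
    intro x w c
    rw [inner_sub_left]
    constructor <;> intro <;> linarith
  have hcell : voronoiCell P p =
      ⋂ q ∈ G, {x : E n | (inner ℝ x (q - p) : ℝ) ≤ (1/2)*‖q-p‖^2 + inner ℝ p (q - p)} := by
    apply Set.Subset.antisymm
    · intro x hx
      simp only [mem_iInter, mem_setOf_eq]
      intro q hq
      rw [hSiff]
      exact (distA x p q).mp (hx q hq.1)
    · intro x hx
      simp only [mem_iInter, mem_setOf_eq] at hx
      have hxG : ∀ q ∈ G, (inner ℝ (x-p) (q-p) : ℝ) ≤ (1/2)*‖q-p‖^2 := by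
        intro q hq
        rw [← hSiff]
        exact hx q hq
      have hxR : ‖x - p‖ ≤ R := hbound x (fun q hq => hxG q (hFG hq))
      intro q hqP
      rw [distA]
      by_cases hqρ : q ∈ Metric.closedBall p ρ
      · exact hxG q ⟨hqP, hqρ⟩
      · have hdq : ρ < dist q p := by rwa [Metric.mem_closedBall, not_le] at hqρ
        have h2R : 2*R+1 ≤ ρ := le_max_right _ _
        have hqn : 2*R+1 < ‖q - p‖ := by rw [← dist_eq_norm]; linarith
        have hin : (inner ℝ (x-p) (q-p) : ℝ) ≤ ‖x-p‖*‖q-p‖ := real_inner_le_norm _ _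
        nlinarith [norm_nonneg (q-p), norm_nonneg (x-p)]
  set s := hGfin.toFinset with hs
  set e : ↥(s : Finset (E n)) ≃ Fin s.card := Fintype.equivFinOfCardEq (Fintype.card_coe s)
    with he
  refine ⟨s.card, fun i => ((e.symm i : E n) - p),
    fun i => (1/2)*‖(e.symm i : E n) - p‖^2 + inner ℝ p ((e.symm i : E n) - p), ?_⟩
  rw [hcell]
  ext x
  simp only [mem_iInter, mem_setOf_eq]
  constructor
  · intro h i
    have hq : ((e.symm i : E n)) ∈ G := by
      exact (Set.Finite.mem_toFinset hGfin).mp (e.symm i).2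
    exact h _ hq
  · intro h q hq
    have hqs : q ∈ s := (Set.Finite.mem_toFinset hGfin).mpr hq
    have h3 := h (e ⟨q, hqs⟩)
    simpa using h3
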